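/- For the utility U(x) = 0 for x ∈ [0,1] and U(x) = log(x) + 1 for x > 1 (and -∞ for x < 0), the Legendre-Fenchel conjugate is V(y) = -log(y) for 0 < y < 1 and V(y) = 0 for y ≥ 1, and the concave envelope is U**(x) = x for x ∈ [0,1] and U**(x) = log(x) + 1 for x > 1. -/
import Mathlib


open Set

noncomputable section

/-- The utility `U(x) = 0` on `[0,1]`, `U(x) = log x + 1` for `x > 1`. -/
def U16 : ℝ → ℝ := fun x => if x ≤ 1 then 0 else Real.log x + 1

/-- Claimed concave envelope: `x` on `[0,1]`, `log x + 1` for `x > 1`. -/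
def E16 : ℝ → ℝ := fun x => if x ≤ 1 then x else Real.log x + 1


-- E16 x ≤ x*y - log y for y ∈ (0,1], x ≥ 0
lemma E16_le (x y : ℝ) (hx : 0 ≤ x) (hy0 : 0 < y) (hy1 : y ≤ 1) :
    E16 x ≤ x * y - Real.log y := by
  unfold E16
  split_ifs with h
  · -- x ≤ 1 : x ≤ x*y - log y, use log y ≤ y - 1, i.e. -log y ≥ 1 - y ≥ x(1-y)
    have hl : Real.log y ≤ y - 1 := Real.log_le_sub_one_of_pos hy0
    nlinarith
  · -- x > 1 : log x + 1 ≤ x*y - log y ⟸ log(xy) ≤ xy - 1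
    push_neg at h
    have hxy : 0 < x * y := by positivity
    have hl : Real.log (x * y) ≤ x * y - 1 := Real.log_le_sub_one_of_pos hxy
    rw [Real.log_mul (by linarith) (ne_of_gt hy0)] at hl
    linarith

lemma E16_attained (x : ℝ) (hx : 0 ≤ x) :
    ∃ y, 0 < y ∧ y ≤ 1 ∧ E16 x = x * y - Real.log y := by
  unfold E16
  by_cases h : x ≤ 1
  · exact ⟨1, one_pos, le_refl 1, by simp [h]⟩
  · push_neg at h
    refine ⟨x⁻¹, by positivity, by
      rw [inv_le_one_iff₀]; right; linarith, ?_⟩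
    rw [if_neg (not_le.mpr h), Real.log_inv, mul_inv_cancel₀ (by linarith)]
    ring

lemma E16_concave : ConcaveOn ℝ (Ici 0) E16 := by
  refine ⟨convex_Ici 0, fun a ha b hb t s ht hs hts => ?_⟩
  simp only [mem_Ici] at ha hb
  have hab : (0:ℝ) ≤ t * a + s * b := by positivity
  obtain ⟨y, hy0, hy1, hy⟩ := E16_attained (t * a + s * b) hab
  have h1 : E16 a ≤ a * y - Real.log y := E16_le a y ha hy0 hy1
  have h2 : E16 b ≤ b * y - Real.log y := E16_le b y hb hy0 hy1
  have := mul_le_mul_of_nonneg_left h1 ht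
  have := mul_le_mul_of_nonneg_left h2 hs
  simp only [smul_eq_mul] at *
  rw [hy]
  have expand : t*(a*y - Real.log y) + s*(b*y - Real.log y)
      = (t*a+s*b)*y - Real.log y := by
    linear_combination (-Real.log y) * hts
  linarith

/-- For `U(x) = 0` on `[0,1]`, `log x + 1` for `x > 1`, the conjugate is
`V(y) = -log y` on `(0,1)` and `V(y) = 0` for `y ≥ 1`, and the concave envelope is
`x` on `[0,1]`, `log x + 1` for `x > 1`. -/
theorem example_conjugate_and_envelope :
    (∀ y : ℝ, 0 < y → y < 1 →
      sSup ((fun x => U16 x - x * y) '' Ici 0) = -Real.log y) ∧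
    (∀ y : ℝ, 1 ≤ y → sSup ((fun x => U16 x - x * y) '' Ici 0) = 0) ∧
    ConcaveOn ℝ (Ici 0) E16 ∧
    (∀ x ∈ Ici (0:ℝ), U16 x ≤ E16 x) ∧
    (∀ g : ℝ → ℝ, ConcaveOn ℝ (Ici 0) g → (∀ x ∈ Ici (0:ℝ), U16 x ≤ g x) →
      ∀ x ∈ Ici (0:ℝ), E16 x ≤ g x) := by
  refine ⟨?_, ?_, E16_concave, ?_, ?_⟩
  · -- conjugate on (0,1)
    intro y hy0 hy1
    apply IsGreatest.csSup_eq
    constructor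
    · -- attained at x = 1/y
      refine ⟨y⁻¹, mem_Ici.mpr (by positivity), ?_⟩
      have h1 : ¬ (y⁻¹ ≤ 1) := by
        rw [not_le]; exact (one_lt_inv_iff₀ ).mpr ⟨hy0, hy1⟩
      simp only [U16, if_neg h1, Real.log_inv]
      rw [inv_mul_cancel₀ (ne_of_gt hy0)]
      ring
    · rintro v ⟨x, hx, rfl⟩
      simp only [mem_Ici] at hx
      simp only [U16]
      split_ifs with h
      · have : Real.log y < 0 := Real.log_neg hy0 hy1
        nlinarith
      · push_neg at h
        have hxy : 0 < x * y := by positivity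
        have hl : Real.log (x * y) ≤ x * y - 1 := Real.log_le_sub_one_of_pos hxy
        rw [Real.log_mul (by linarith) (ne_of_gt hy0)] at hl
        linarith
  · -- conjugate on [1,∞)
    intro y hy
    apply IsGreatest.csSup_eq
    constructor
    · exact ⟨0, mem_Ici.mpr le_rfl, by simp [U16]⟩
    · rintro v ⟨x, hx, rfl⟩
      simp only [mem_Ici] at hx
      simp only [U16]
      split_ifs with h
      · nlinarith
      · push_neg at h
        have hl : Real.log x ≤ x - 1 := Real.log_le_sub_one_of_pos (by linarith)
        nlinarith
  · -- U ≤ E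
    intro x hx
    simp only [mem_Ici] at hx
    simp only [U16, E16]
    split_ifs with h
    · exact hx
    · exact le_refl _
  · -- minimality
    intro g hg hge x hx
    simp only [mem_Ici] at hx
    by_cases h : x ≤ 1
    · -- E16 x = x ≤ g x
      rw [show E16 x = x from if_pos h]
      -- show x ≤ g x via: ∀ ε > 0, x - ε ≤ g x
      refine le_of_forall_pos_le_add ?_
      intro ε hε
      set z : ℝ := 1 + min ε 1 with hz
      have hz1 : 1 < z := by
        have : 0 < min ε 1 := lt_min hε one_pos
        simp [hz]; linarith
      have hz2 : z ≤ 2 := by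
        have : min ε 1 ≤ 1 := min_le_right _ _
        simp [hz]; linarith
      have hz0 : 0 < z := by linarith
      -- convex combination: x = (1 - x/z) * 0 + (x/z) * z
      have hs : 0 ≤ x / z := by positivity
      have ht : 0 ≤ 1 - x / z := by
        have : x / z ≤ 1 := by
          rw [div_le_one hz0]; linarith
        linarith
      have hcomb := hg.2 (mem_Ici.mpr (le_refl (0:ℝ)))
        (mem_Ici.mpr (le_of_lt hz0)) ht hs (by ring)
      simp only [smul_eq_mul, mul_zero, zero_add] at hcomb
      rw [div_mul_cancel₀ _ (ne_of_gt hz0)] at hcomb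
      have hg0 : (0:ℝ) ≤ g 0 := by
        have := hge 0 (mem_Ici.mpr (le_refl 0))
        simpa [U16] using this
      have hgz : Real.log z + 1 ≤ g z := by
        have := hge z (mem_Ici.mpr (le_of_lt hz0))
        simpa [U16, not_le.mpr hz1] using this
      -- g x ≥ (x/z) * (log z + 1)
      have key : x / z * (Real.log z + 1) ≤ g x := by
        calc x / z * (Real.log z + 1) ≤ (1 - x/z) * g 0 + x / z * g z := by
              have := mul_le_mul_of_nonneg_left hgz hs
              nlinarith
          _ ≤ g x := hcomb
      -- now show x - ε ≤ x/z * (log z + 1)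
      have hlog : 1 - 1/z ≤ Real.log z := by
        have h1 : Real.log z⁻¹ ≤ z⁻¹ - 1 := Real.log_le_sub_one_of_pos (by positivity)
        rw [Real.log_inv] at h1
        have : (1:ℝ)/z = z⁻¹ := one_div z
        linarith [this ▸ h1]
      -- x - x/z*(log z + 1) = x*(z - log z - 1)/z ≤ (z-1)^2/z ≤ (z-1)^2 ≤ min ε 1 * min ε 1 ≤ ε
      have hd : x - x / z * (Real.log z + 1) ≤ ε := by
        have h2 : z - 1 - Real.log z ≤ (z-1)^2 / z := by
          have hh : (z-1)^2/z = z - 2 + 1/z := by field_simp; ring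
          rw [hh]; linarith
        have h3 : x - x / z * (Real.log z + 1) = x / z * (z - 1 - Real.log z) := by
          field_simp; ring
        have h4 : x / z ≤ 1 := by rw [div_le_one hz0]; linarith
        have h5 : (z-1)^2 / z ≤ (z-1)^2 := by
          apply div_le_self (by positivity) (by linarith)
        have h6 : (z-1)^2 ≤ ε := by
          have hm1 : z - 1 = min ε 1 := by simp [hz]
          have : min ε 1 ≤ ε := min_le_left _ _
          have h7 : min ε 1 ≤ 1 := min_le_right _ _
          have h8 : 0 ≤ min ε 1 := le_of_lt (lt_min hε one_pos)
          rw [hm1]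
          nlinarith
        have h9 : 0 ≤ z - 1 - Real.log z := by
          have := Real.log_le_sub_one_of_pos hz0
          linarith
        calc x - x / z * (Real.log z + 1) = x / z * (z - 1 - Real.log z) := h3
          _ ≤ 1 * (z - 1 - Real.log z) := mul_le_mul_of_nonneg_right h4 h9
          _ = z - 1 - Real.log z := one_mul _
          _ ≤ (z-1)^2 / z := h2
          _ ≤ (z-1)^2 := h5
          _ ≤ ε := h6
      linarith
    · push_neg at h
      rw [show E16 x = Real.log x + 1 from if_neg (not_le.mpr h)]
      have := hge x (mem_Ici.mpr hx)
      simpa [U16, not_le.mpr h] using this
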